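/- Let the sequences {w^k} and {w̃^k} be generated by GS-ADMM with τ + s > 0. Then for every k and every w ∈ M: h(u) − h(ũ^k) + ⟨w − w̃^k, J(w)⟩ ≥ (1/2)(‖w − w^{k+1}‖_H² − ‖w − w^k‖_H²) + (1/2)‖w^k − w̃^k‖_G². -/

import Mathlib

open scoped RealInnerProductSpace
open Matrix Filter

/-- Multiplication of a matrix with a vector, viewed as a map between Euclidean spaces. -/
noncomputable def mv {n m : ℕ} (M : Matrix (Fin n) (Fin m) ℝ)
    (v : EuclideanSpace ℝ (Fin m)) : EuclideanSpace ℝ (Fin n) :=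
  WithLp.toLp 2 (M.mulVec v)

/-- `sA A x = Σ_i A_i x_i`. -/
noncomputable def sA {p n : ℕ} {m : Fin p → ℕ}
    (A : ∀ i, Matrix (Fin n) (Fin (m i)) ℝ)
    (x : ∀ i, EuclideanSpace ℝ (Fin (m i))) : EuclideanSpace ℝ (Fin n) :=
  ∑ i, mv (A i) (x i)

/-- The augmented Lagrangian
`L_β(x,y,λ) = Σ_i f_i(x_i) + Σ_j g_j(y_j) − ⟨λ, Ax + By − c⟩ + (β/2)‖Ax + By − c‖²`. -/
noncomputable def Lag {p q n : ℕ} {m : Fin p → ℕ} {d : Fin q → ℕ}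
    (A : ∀ i, Matrix (Fin n) (Fin (m i)) ℝ)
    (B : ∀ j, Matrix (Fin n) (Fin (d j)) ℝ)
    (c : EuclideanSpace ℝ (Fin n))
    (f : ∀ i, EuclideanSpace ℝ (Fin (m i)) → ℝ)
    (g : ∀ j, EuclideanSpace ℝ (Fin (d j)) → ℝ)
    (β : ℝ)
    (x : ∀ i, EuclideanSpace ℝ (Fin (m i)))
    (y : ∀ j, EuclideanSpace ℝ (Fin (d j)))
    (lam : EuclideanSpace ℝ (Fin n)) : ℝ :=
  (∑ i, f i (x i)) + (∑ j, g j (y j)) - ⟪lam, sA A x + sA B y - c⟫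
    + β / 2 * ‖sA A x + sA B y - c‖ ^ 2

/-- The `H`-quadratic form `‖(x,y,λ)‖_H²`. -/
noncomputable def Hform {p q n : ℕ} {m : Fin p → ℕ} {d : Fin q → ℕ}
    (A : ∀ i, Matrix (Fin n) (Fin (m i)) ℝ)
    (B : ∀ j, Matrix (Fin n) (Fin (d j)) ℝ)
    (β σ1 σ2 τ s : ℝ)
    (x : ∀ i, EuclideanSpace ℝ (Fin (m i)))
    (y : ∀ j, EuclideanSpace ℝ (Fin (d j)))
    (lam : EuclideanSpace ℝ (Fin n)) : ℝ :=
  β * ((σ1 + 1) * (∑ i, ‖mv (A i) (x i)‖ ^ 2) - ‖sA A x‖ ^ 2)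
    + (σ2 + 1) * β * (∑ j, ‖mv (B j) (y j)‖ ^ 2)
    - τ * s / (τ + s) * β * ‖sA B y‖ ^ 2
    - 2 * τ / (τ + s) * ⟪sA B y, lam⟫
    + 1 / (β * (τ + s)) * ‖lam‖ ^ 2

/-- The `G`-quadratic form `‖(x,y,λ)‖_G²`. -/
noncomputable def Gform {p q n : ℕ} {m : Fin p → ℕ} {d : Fin q → ℕ}
    (A : ∀ i, Matrix (Fin n) (Fin (m i)) ℝ)
    (B : ∀ j, Matrix (Fin n) (Fin (d j)) ℝ)
    (β σ1 σ2 τ s : ℝ)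
    (x : ∀ i, EuclideanSpace ℝ (Fin (m i)))
    (y : ∀ j, EuclideanSpace ℝ (Fin (d j)))
    (lam : EuclideanSpace ℝ (Fin n)) : ℝ :=
  β * ((σ1 + 1) * (∑ i, ‖mv (A i) (x i)‖ ^ 2) - ‖sA A x‖ ^ 2)
    + (σ2 + 1) * β * (∑ j, ‖mv (B j) (y j)‖ ^ 2)
    - s * β * ‖sA B y‖ ^ 2
    + 2 * (s - 1) * ⟪sA B y, lam⟫
    + (2 - τ - s) / β * ‖lam‖ ^ 2

/-- The `H_y`-quadratic form `‖y‖_{H_y}² = β[(σ₂+1)Σ_j‖B_j y_j‖² − ‖By‖²]`. -/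
noncomputable def Hyform {q n : ℕ} {d : Fin q → ℕ}
    (B : ∀ j, Matrix (Fin n) (Fin (d j)) ℝ)
    (β σ2 : ℝ)
    (y : ∀ j, EuclideanSpace ℝ (Fin (d j))) : ℝ :=
  β * ((σ2 + 1) * (∑ j, ‖mv (B j) (y j)‖ ^ 2) - ‖sA B y‖ ^ 2)

lemma limit_aux {a c : ℝ} (h : ∀ t : ℝ, 0 < t → t ≤ 1 → 0 ≤ t * a + t ^ 2 * c) : 0 ≤ a := by
  by_contra h'
  push_neg at h'
  set t : ℝ := min 1 (-a / (|c| + 1)) with ht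
  have hc : (0:ℝ) < |c| + 1 := by positivity
  have ht0 : 0 < t := by
    apply lt_min one_pos
    exact div_pos (by linarith) hc
  have ht1 : t ≤ 1 := min_le_left _ _
  have ht2 : t ≤ -a / (|c| + 1) := min_le_right _ _
  have key := h t ht0 ht1
  have h3 : t * (|c| + 1) ≤ -a := by
    rw [← le_div_iff₀ hc]; exact ht2
  have h4 : t * c ≤ t * |c| := by
    apply mul_le_mul_of_nonneg_left (le_abs_self c) ht0.le
  nlinarith [mul_pos ht0 ht0]

lemma mv_sub {n m : ℕ} (M : Matrix (Fin n) (Fin m) ℝ) (a b : EuclideanSpace ℝ (Fin m)) :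
    mv M (a - b) = mv M a - mv M b := by
  ext i
  simp [mv, Matrix.mulVec, dotProduct, mul_sub, Finset.sum_sub_distrib]

lemma mv_add {n m : ℕ} (M : Matrix (Fin n) (Fin m) ℝ) (a b : EuclideanSpace ℝ (Fin m)) :
    mv M (a + b) = mv M a + mv M b := by
  ext i
  simp [mv, Matrix.mulVec, dotProduct, mul_add, Finset.sum_add_distrib]

lemma mv_smul {n m : ℕ} (M : Matrix (Fin n) (Fin m) ℝ) (t : ℝ) (a : EuclideanSpace ℝ (Fin m)) :
    mv M (t • a) = t • mv M a := by
  ext i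
  simp [mv, Matrix.mulVec, dotProduct, Finset.mul_sum]
  apply Finset.sum_congr rfl; intros; ring

lemma inner_mv_transpose {n m : ℕ} (M : Matrix (Fin n) (Fin m) ℝ)
    (z : EuclideanSpace ℝ (Fin m)) (w : EuclideanSpace ℝ (Fin n)) :
    ⟪z, mv Mᵀ w⟫ = ⟪mv M z, w⟫ := by
  simp only [mv, PiLp.inner_apply, RCLike.inner_apply, conj_trivial, Matrix.mulVec, PiLp.toLp_apply,
    dotProduct, Matrix.transpose_apply]
  simp only [Finset.mul_sum, Finset.sum_mul]
  rw [Finset.sum_comm]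
  apply Finset.sum_congr rfl; intros; apply Finset.sum_congr rfl; intros; ring

lemma vi_lemma {M n : ℕ} {f : EuclideanSpace ℝ (Fin M) → ℝ}
    (hf : ConvexOn ℝ Set.univ f) {X : Set (EuclideanSpace ℝ (Fin M))} (hX : Convex ℝ X)
    (T : Matrix (Fin n) (Fin M) ℝ) (lam w0 w1 : EuclideanSpace ℝ (Fin n)) (β γ : ℝ)
    (u : EuclideanSpace ℝ (Fin M)) (hu : u ∈ X)
    (hmin : ∀ z ∈ X,
      f u - ⟪lam, mv T u + w0⟫ + β / 2 * ‖mv T u + w0‖ ^ 2 + γ / 2 * ‖mv T u - w1‖ ^ 2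
        ≤ f z - ⟪lam, mv T z + w0⟫ + β / 2 * ‖mv T z + w0‖ ^ 2 + γ / 2 * ‖mv T z - w1‖ ^ 2)
    (z : EuclideanSpace ℝ (Fin M)) (hz : z ∈ X) :
    0 ≤ f z - f u + ⟪mv T z - mv T u, -lam + β • (mv T u + w0) + γ • (mv T u - w1)⟫ := by
  set w : EuclideanSpace ℝ (Fin n) := mv T u with hw
  set v : EuclideanSpace ℝ (Fin n) := mv T z - mv T u with hv
  apply limit_aux
  intro t ht0 ht1
  have hztX : u + t • (z - u) ∈ X := by
    have h := hX hu hz (by linarith : (0:ℝ) ≤ 1 - t) ht0.le (by ring)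
    have : (1 - t) • u + t • z = u + t • (z - u) := by module
    rwa [this] at h
  have hTz : mv T (u + t • (z - u)) = w + t • v := by
    rw [mv_add, mv_smul, mv_sub, hw, hv]
  have hcvx : f (u + t • (z - u)) ≤ f u + t * (f z - f u) := by
    have h := hf.2 (Set.mem_univ u) (Set.mem_univ z) (by linarith : (0:ℝ) ≤ 1 - t) ht0.le
      (by ring : (1 - t) + t = 1)
    have he : (1 - t) • u + t • z = u + t • (z - u) := by module
    rw [he] at h
    simp only [smul_eq_mul] at h
    linarith
  have hmin' := hmin _ hztX
  rw [hTz] at hmin'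
  have hQ : - ⟪lam, (w + t • v) + w0⟫ + β / 2 * ‖(w + t • v) + w0‖ ^ 2
        + γ / 2 * ‖(w + t • v) - w1‖ ^ 2
      = (- ⟪lam, w + w0⟫ + β / 2 * ‖w + w0‖ ^ 2 + γ / 2 * ‖w - w1‖ ^ 2)
        + t * ⟪v, -lam + β • (w + w0) + γ • (w - w1)⟫
        + t ^ 2 * ((β + γ) / 2 * ‖v‖ ^ 2) := by
    simp only [← real_inner_self_eq_norm_sq, inner_add_left, inner_add_right, inner_sub_left,
      inner_sub_right, real_inner_smul_left, real_inner_smul_right, inner_neg_left,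
      inner_neg_right, real_inner_comm w v, real_inner_comm w0 v, real_inner_comm w1 v,
      real_inner_comm lam v, real_inner_comm w0 w, real_inner_comm w1 w,
      real_inner_comm lam w, real_inner_comm w1 w0, real_inner_comm lam w0,
      real_inner_comm lam w1]
    ring
  have hexp : t * (f z - f u + ⟪v, -lam + β • (w + w0) + γ • (w - w1)⟫)
        + t ^ 2 * ((β + γ) / 2 * ‖v‖ ^ 2)
      = t * (f z - f u) + t * ⟪v, -lam + β • (w + w0) + γ • (w - w1)⟫
        + t ^ 2 * ((β + γ) / 2 * ‖v‖ ^ 2) := by ring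
  rw [hexp]
  linarith [hmin', hcvx, hQ.ge, hQ.le]

lemma sum_update_f {p : ℕ} {m : Fin p → ℕ}
    (F : ∀ i, EuclideanSpace ℝ (Fin (m i)) → ℝ)
    (x : ∀ i, EuclideanSpace ℝ (Fin (m i))) (i : Fin p) (z : EuclideanSpace ℝ (Fin (m i))) :
    ∑ j, F j (Function.update x i z j) = (∑ j, F j (x j)) + F i z - F i (x i) := by
  have hs : ∑ j, (F j (Function.update x i z j) - F j (x j)) = F i z - F i (x i) := by
    rw [Finset.sum_eq_single i]
    · rw [Function.update_self]
    · intro b _ hb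
      rw [Function.update_of_ne hb]; ring
    · intro h; exact absurd (Finset.mem_univ i) h
  rw [Finset.sum_sub_distrib] at hs
  linarith

lemma sA_update {p n : ℕ} {m : Fin p → ℕ}
    (A : ∀ i, Matrix (Fin n) (Fin (m i)) ℝ)
    (x : ∀ i, EuclideanSpace ℝ (Fin (m i))) (i : Fin p) (z : EuclideanSpace ℝ (Fin (m i))) :
    sA A (Function.update x i z) = sA A x + mv (A i) z - mv (A i) (x i) := by
  have hs : ∑ j, (mv (A j) (Function.update x i z j) - mv (A j) (x j))
      = mv (A i) z - mv (A i) (x i) := by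
    rw [Finset.sum_eq_single i]
    · rw [Function.update_self]
    · intro b _ hb
      rw [Function.update_of_ne hb, sub_self]
    · intro h; exact absurd (Finset.mem_univ i) h
  rw [Finset.sum_sub_distrib] at hs
  unfold sA
  have h2 := sub_eq_iff_eq_add.mp hs
  rw [h2]; abel

lemma sA_sub {p n : ℕ} {m : Fin p → ℕ}
    (A : ∀ i, Matrix (Fin n) (Fin (m i)) ℝ)
    (a b : ∀ i, EuclideanSpace ℝ (Fin (m i))) :
    sA A (fun i => a i - b i) = sA A a - sA A b := by
  unfold sA
  rw [← Finset.sum_sub_distrib]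
  exact Finset.sum_congr rfl (fun i _ => mv_sub _ _ _)

lemma lag_x {p q n : ℕ} {m : Fin p → ℕ} {d : Fin q → ℕ}
    (A : ∀ i, Matrix (Fin n) (Fin (m i)) ℝ)
    (B : ∀ j, Matrix (Fin n) (Fin (d j)) ℝ)
    (c : EuclideanSpace ℝ (Fin n))
    (f : ∀ i, EuclideanSpace ℝ (Fin (m i)) → ℝ)
    (g : ∀ j, EuclideanSpace ℝ (Fin (d j)) → ℝ)
    (β σ1 : ℝ)
    (xk : ∀ i, EuclideanSpace ℝ (Fin (m i)))
    (yk : ∀ j, EuclideanSpace ℝ (Fin (d j)))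
    (lamk : EuclideanSpace ℝ (Fin n)) (i : Fin p) (z : EuclideanSpace ℝ (Fin (m i))) :
    Lag A B c f g β (Function.update xk i z) yk lamk + σ1 * β / 2 * ‖mv (A i) (z - xk i)‖ ^ 2
      = (f i z - ⟪lamk, mv (A i) z + (sA A xk - mv (A i) (xk i) + sA B yk - c)⟫
          + β / 2 * ‖mv (A i) z + (sA A xk - mv (A i) (xk i) + sA B yk - c)‖ ^ 2
          + σ1 * β / 2 * ‖mv (A i) z - mv (A i) (xk i)‖ ^ 2)
        + ((∑ i', f i' (xk i')) - f i (xk i) + (∑ j, g j (yk j))) := by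
  have hvec : sA A (Function.update xk i z) + sA B yk - c
      = mv (A i) z + (sA A xk - mv (A i) (xk i) + sA B yk - c) := by
    rw [sA_update]; abel
  unfold Lag
  rw [hvec, sum_update_f, mv_sub]
  ring

lemma lag_y {p q n : ℕ} {m : Fin p → ℕ} {d : Fin q → ℕ}
    (A : ∀ i, Matrix (Fin n) (Fin (m i)) ℝ)
    (B : ∀ j, Matrix (Fin n) (Fin (d j)) ℝ)
    (c : EuclideanSpace ℝ (Fin n))
    (f : ∀ i, EuclideanSpace ℝ (Fin (m i)) → ℝ)
    (g : ∀ j, EuclideanSpace ℝ (Fin (d j)) → ℝ)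
    (β σ2 : ℝ)
    (xk : ∀ i, EuclideanSpace ℝ (Fin (m i)))
    (yk : ∀ j, EuclideanSpace ℝ (Fin (d j)))
    (lamk : EuclideanSpace ℝ (Fin n)) (j : Fin q) (z : EuclideanSpace ℝ (Fin (d j))) :
    Lag A B c f g β xk (Function.update yk j z) lamk + σ2 * β / 2 * ‖mv (B j) (z - yk j)‖ ^ 2
      = (g j z - ⟪lamk, mv (B j) z + (sA A xk + sA B yk - mv (B j) (yk j) - c)⟫
          + β / 2 * ‖mv (B j) z + (sA A xk + sA B yk - mv (B j) (yk j) - c)‖ ^ 2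
          + σ2 * β / 2 * ‖mv (B j) z - mv (B j) (yk j)‖ ^ 2)
        + ((∑ i, f i (xk i)) - g j (yk j) + (∑ j', g j' (yk j'))) := by
  have hvec : sA A xk + sA B (Function.update yk j z) - c
      = mv (B j) z + (sA A xk + sA B yk - mv (B j) (yk j) - c) := by
    rw [sA_update]; abel
  unfold Lag
  rw [hvec, sum_update_f, mv_sub]
  ring

lemma sum_vi_combine {p n : ℕ} (F1 F2 : Fin p → ℝ)
    (cv dv : Fin p → EuclideanSpace ℝ (Fin n)) (CX : EuclideanSpace ℝ (Fin n)) (κ : ℝ) :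
    ∑ i, (F1 i - F2 i + ⟪cv i, CX - κ • dv i⟫)
      = (∑ i, F1 i) - (∑ i, F2 i) + (⟪∑ i, cv i, CX⟫ - κ * ∑ i, ⟪cv i, dv i⟫) := by
  simp only [inner_sub_right, real_inner_smul_right, sum_inner, Finset.mul_sum,
    Finset.sum_add_distrib, Finset.sum_sub_distrib]

set_option maxHeartbeats 4000000 in
/-- key contraction inequality of GS-ADMM:
`h(u) − h(ũ^k) + ⟨w − w̃^k, J(w)⟩ ≥ (1/2)(‖w − w^{k+1}‖_H² − ‖w − w^k‖_H²) + (1/2)‖w^k − w̃^k‖_G²`. -/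
theorem stmt6
    {p q n : ℕ} (hp : 1 ≤ p) (hq : 1 ≤ q)
    {m : Fin p → ℕ} {d : Fin q → ℕ}
    (A : ∀ i, Matrix (Fin n) (Fin (m i)) ℝ)
    (B : ∀ j, Matrix (Fin n) (Fin (d j)) ℝ)
    (hA : ∀ i, LinearIndependent ℝ (fun l => (A i)ᵀ l))
    (hB : ∀ j, LinearIndependent ℝ (fun l => (B j)ᵀ l))
    (c : EuclideanSpace ℝ (Fin n))
    (X : ∀ i, Set (EuclideanSpace ℝ (Fin (m i))))
    (Y : ∀ j, Set (EuclideanSpace ℝ (Fin (d j))))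
    (hXne : ∀ i, (X i).Nonempty) (hXcl : ∀ i, IsClosed (X i)) (hXcv : ∀ i, Convex ℝ (X i))
    (hYne : ∀ j, (Y j).Nonempty) (hYcl : ∀ j, IsClosed (Y j)) (hYcv : ∀ j, Convex ℝ (Y j))
    (f : ∀ i, EuclideanSpace ℝ (Fin (m i)) → ℝ)
    (g : ∀ j, EuclideanSpace ℝ (Fin (d j)) → ℝ)
    (hf : ∀ i, ConvexOn ℝ Set.univ (f i))
    (hg : ∀ j, ConvexOn ℝ Set.univ (g j))
    (β σ1 σ2 τ s : ℝ) (hβ : 0 < β)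
    (x : ℕ → ∀ i, EuclideanSpace ℝ (Fin (m i)))
    (y : ℕ → ∀ j, EuclideanSpace ℝ (Fin (d j)))
    (lam lamh : ℕ → EuclideanSpace ℝ (Fin n))
    (hxmin : ∀ k i, x (k+1) i ∈ X i ∧ ∀ z ∈ X i,
      Lag A B c f g β (Function.update (x k) i (x (k+1) i)) (y k) (lam k)
          + σ1 * β / 2 * ‖mv (A i) (x (k+1) i - x k i)‖ ^ 2
        ≤ Lag A B c f g β (Function.update (x k) i z) (y k) (lam k)
          + σ1 * β / 2 * ‖mv (A i) (z - x k i)‖ ^ 2)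
    (hlamh : ∀ k, lamh k = lam k - (τ * β) • (sA A (x (k+1)) + sA B (y k) - c))
    (hymin : ∀ k j, y (k+1) j ∈ Y j ∧ ∀ z ∈ Y j,
      Lag A B c f g β (x (k+1)) (Function.update (y k) j (y (k+1) j)) (lamh k)
          + σ2 * β / 2 * ‖mv (B j) (y (k+1) j - y k j)‖ ^ 2
        ≤ Lag A B c f g β (x (k+1)) (Function.update (y k) j z) (lamh k)
          + σ2 * β / 2 * ‖mv (B j) (z - y k j)‖ ^ 2)
    (hlam : ∀ k, lam (k+1) = lamh k - (s * β) • (sA A (x (k+1)) + sA B (y (k+1)) - c))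
    (hτs : 0 < τ + s) :
    ∀ k : ℕ,
      let tl : EuclideanSpace ℝ (Fin n) :=
        lam k - β • (sA A (x (k+1)) + sA B (y k) - c);
      ∀ (xx : ∀ i, EuclideanSpace ℝ (Fin (m i)))
        (yy : ∀ j, EuclideanSpace ℝ (Fin (d j)))
        (ll : EuclideanSpace ℝ (Fin n)),
        (∀ i, xx i ∈ X i) → (∀ j, yy j ∈ Y j) →
        (∑ i, f i (xx i)) + (∑ j, g j (yy j))
            - ((∑ i, f i (x (k+1) i)) + (∑ j, g j (y (k+1) j)))
          + ((∑ i, ⟪xx i - x (k+1) i, -(mv (A i)ᵀ ll)⟫)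
            + (∑ j, ⟪yy j - y (k+1) j, -(mv (B j)ᵀ ll)⟫)
            + ⟪ll - tl, sA A xx + sA B yy - c⟫)
        ≥ 1 / 2 *
            (Hform A B β σ1 σ2 τ s (fun i => xx i - x (k+1) i)
                (fun j => yy j - y (k+1) j) (ll - lam (k+1))
              - Hform A B β σ1 σ2 τ s (fun i => xx i - x k i)
                (fun j => yy j - y k j) (ll - lam k))
          + 1 / 2 *
            Gform A B β σ1 σ2 τ s (fun i => x k i - x (k+1) i)
              (fun j => y k j - y (k+1) j) (lam k - tl) := by
  intro k tl xx yy ll hxx hyy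
  have hβ' : β ≠ 0 := ne_of_gt hβ
  have hτs' : τ + s ≠ 0 := ne_of_gt hτs
  have htl : tl = lam k - β • (sA A (x (k+1)) + sA B (y k) - c) := rfl
  -- variational inequality for the x-blocks
  have hVIx : ∀ i : Fin p, 0 ≤ f i (xx i) - f i (x (k+1) i)
      + ⟪mv (A i) (xx i) - mv (A i) (x (k+1) i),
          (-(lam k) + β • ((sA A (x (k+1)) + sA B (y k) - c) + (sA A (x k) - sA A (x (k+1)))))
            - ((1 + σ1) * β) • (mv (A i) (x k i) - mv (A i) (x (k+1) i))⟫ := by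
    intro i
    have hvi := vi_lemma (hf i) (hXcv i) (A i) (lam k)
      (sA A (x k) - mv (A i) (x k i) + sA B (y k) - c) (mv (A i) (x k i)) β (σ1 * β)
      (x (k+1) i) (hxmin k i).1 (fun z hz => by
        have h1 := lag_x A B c f g β σ1 (x k) (y k) (lam k) i (x (k+1) i)
        have h2 := lag_x A B c f g β σ1 (x k) (y k) (lam k) i z
        have h3 := (hxmin k i).2 z hz
        linarith) (xx i) (hxx i)
    have hG : -(lam k)
          + β • (mv (A i) (x (k+1) i) + (sA A (x k) - mv (A i) (x k i) + sA B (y k) - c))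
          + (σ1 * β) • (mv (A i) (x (k+1) i) - mv (A i) (x k i))
        = (-(lam k) + β • ((sA A (x (k+1)) + sA B (y k) - c) + (sA A (x k) - sA A (x (k+1)))))
            - ((1 + σ1) * β) • (mv (A i) (x k i) - mv (A i) (x (k+1) i)) := by
      have hb : sA A (x (k+1)) + sA B (y k) - c + (sA A (x k) - sA A (x (k+1)))
          = sA A (x k) + sA B (y k) - c := by abel
      rw [hb]; module
    rwa [hG] at hvi
  -- variational inequality for the y-blocks
  have hVIy : ∀ j : Fin q, 0 ≤ g j (yy j) - g j (y (k+1) j)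
      + ⟪mv (B j) (yy j) - mv (B j) (y (k+1) j),
          (-(lam k) + ((1 + τ) * β) • (sA A (x (k+1)) + sA B (y k) - c))
            - ((1 + σ2) * β) • (mv (B j) (y k j) - mv (B j) (y (k+1) j))⟫ := by
    intro j
    have hvi := vi_lemma (hg j) (hYcv j) (B j) (lamh k)
      (sA A (x (k+1)) + sA B (y k) - mv (B j) (y k j) - c) (mv (B j) (y k j)) β (σ2 * β)
      (y (k+1) j) (hymin k j).1 (fun z hz => by
        have h1 := lag_y A B c f g β σ2 (x (k+1)) (y k) (lamh k) j (y (k+1) j)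
        have h2 := lag_y A B c f g β σ2 (x (k+1)) (y k) (lamh k) j z
        have h3 := (hymin k j).2 z hz
        linarith) (yy j) (hyy j)
    have hG : -(lamh k)
          + β • (mv (B j) (y (k+1) j) + (sA A (x (k+1)) + sA B (y k) - mv (B j) (y k j) - c))
          + (σ2 * β) • (mv (B j) (y (k+1) j) - mv (B j) (y k j))
        = (-(lam k) + ((1 + τ) * β) • (sA A (x (k+1)) + sA B (y k) - c))
            - ((1 + σ2) * β) • (mv (B j) (y k j) - mv (B j) (y (k+1) j)) := by
      rw [hlamh k]; module
    rwa [hG] at hvi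
  have hcsx : ∑ i, (mv (A i) (xx i) - mv (A i) (x (k+1) i)) = sA A xx - sA A (x (k+1)) := by
    rw [Finset.sum_sub_distrib]; rfl
  have hcsy : ∑ j, (mv (B j) (yy j) - mv (B j) (y (k+1) j)) = sA B yy - sA B (y (k+1)) := by
    rw [Finset.sum_sub_distrib]; rfl
  -- summed x-inequality
  have hX0 : 0 ≤ ((∑ i, f i (xx i)) - (∑ i, f i (x (k+1) i)))
      + (⟪sA A xx - sA A (x (k+1)),
            -(lam k) + β • ((sA A (x (k+1)) + sA B (y k) - c) + (sA A (x k) - sA A (x (k+1))))⟫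
        - (1 + σ1) * β * ∑ i, ⟪mv (A i) (xx i) - mv (A i) (x (k+1) i),
            mv (A i) (x k i) - mv (A i) (x (k+1) i)⟫) := by
    have hsum : 0 ≤ ∑ i, (f i (xx i) - f i (x (k+1) i)
        + ⟪mv (A i) (xx i) - mv (A i) (x (k+1) i),
            (-(lam k) + β • ((sA A (x (k+1)) + sA B (y k) - c) + (sA A (x k) - sA A (x (k+1)))))
              - ((1 + σ1) * β) • (mv (A i) (x k i) - mv (A i) (x (k+1) i))⟫) :=
      Finset.sum_nonneg (fun i _ => hVIx i)
    have heq := sum_vi_combine (fun i => f i (xx i)) (fun i => f i (x (k+1) i))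
      (fun i => mv (A i) (xx i) - mv (A i) (x (k+1) i))
      (fun i => mv (A i) (x k i) - mv (A i) (x (k+1) i))
      (-(lam k) + β • ((sA A (x (k+1)) + sA B (y k) - c) + (sA A (x k) - sA A (x (k+1)))))
      ((1 + σ1) * β)
    rw [heq, hcsx] at hsum
    exact hsum
  -- summed y-inequality
  have hY0 : 0 ≤ ((∑ j, g j (yy j)) - (∑ j, g j (y (k+1) j)))
      + (⟪sA B yy - sA B (y (k+1)),
            -(lam k) + ((1 + τ) * β) • (sA A (x (k+1)) + sA B (y k) - c)⟫
        - (1 + σ2) * β * ∑ j, ⟪mv (B j) (yy j) - mv (B j) (y (k+1) j),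
            mv (B j) (y k j) - mv (B j) (y (k+1) j)⟫) := by
    have hsum : 0 ≤ ∑ j, (g j (yy j) - g j (y (k+1) j)
        + ⟪mv (B j) (yy j) - mv (B j) (y (k+1) j),
            (-(lam k) + ((1 + τ) * β) • (sA A (x (k+1)) + sA B (y k) - c))
              - ((1 + σ2) * β) • (mv (B j) (y k j) - mv (B j) (y (k+1) j))⟫) :=
      Finset.sum_nonneg (fun j _ => hVIy j)
    have heq := sum_vi_combine (fun j => g j (yy j)) (fun j => g j (y (k+1) j))
      (fun j => mv (B j) (yy j) - mv (B j) (y (k+1) j))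
      (fun j => mv (B j) (y k j) - mv (B j) (y (k+1) j))
      (-(lam k) + ((1 + τ) * β) • (sA A (x (k+1)) + sA B (y k) - c))
      ((1 + σ2) * β)
    rw [heq, hcsy] at hsum
    exact hsum
  -- lambda update formula
  have hlam1 : lam (k+1) = lam k - ((τ + s) * β) • (sA A (x (k+1)) + sA B (y k) - c)
      + (s * β) • (sA B (y k) - sA B (y (k+1))) := by
    rw [hlam k, hlamh k]
    have he : sA A (x (k+1)) + sA B (y (k+1)) - c
        = (sA A (x (k+1)) + sA B (y k) - c) - (sA B (y k) - sA B (y (k+1))) := by abel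
    rw [he]; module
  -- sums-of-squares expansions
  have hS2x : ∑ i, ‖mv (A i) (xx i) - mv (A i) (x k i)‖ ^ 2
      = ∑ i, ‖mv (A i) (xx i) - mv (A i) (x (k+1) i)‖ ^ 2
        - 2 * ∑ i, ⟪mv (A i) (xx i) - mv (A i) (x (k+1) i),
            mv (A i) (x k i) - mv (A i) (x (k+1) i)⟫
        + ∑ i, ‖mv (A i) (x k i) - mv (A i) (x (k+1) i)‖ ^ 2 := by
    rw [Finset.mul_sum, ← Finset.sum_sub_distrib, ← Finset.sum_add_distrib]
    refine Finset.sum_congr rfl (fun i _ => ?_)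
    simp only [← real_inner_self_eq_norm_sq, inner_sub_left, inner_sub_right,
      real_inner_comm (mv (A i) (x k i)) (mv (A i) (xx i)),
      real_inner_comm (mv (A i) (x (k+1) i)) (mv (A i) (xx i)),
      real_inner_comm (mv (A i) (x (k+1) i)) (mv (A i) (x k i))]
    ring
  have hS2y : ∑ j, ‖mv (B j) (yy j) - mv (B j) (y k j)‖ ^ 2
      = ∑ j, ‖mv (B j) (yy j) - mv (B j) (y (k+1) j)‖ ^ 2
        - 2 * ∑ j, ⟪mv (B j) (yy j) - mv (B j) (y (k+1) j),
            mv (B j) (y k j) - mv (B j) (y (k+1) j)⟫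
        + ∑ j, ‖mv (B j) (y k j) - mv (B j) (y (k+1) j)‖ ^ 2 := by
    rw [Finset.mul_sum, ← Finset.sum_sub_distrib, ← Finset.sum_add_distrib]
    refine Finset.sum_congr rfl (fun j _ => ?_)
    simp only [← real_inner_self_eq_norm_sq, inner_sub_left, inner_sub_right,
      real_inner_comm (mv (B j) (y k j)) (mv (B j) (yy j)),
      real_inner_comm (mv (B j) (y (k+1) j)) (mv (B j) (yy j)),
      real_inner_comm (mv (B j) (y (k+1) j)) (mv (B j) (y k j))]
    ring
  -- J-term rewrites
  have hJ1 : (∑ i, ⟪xx i - x (k+1) i, -(mv (A i)ᵀ ll)⟫)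
      = -⟪sA A xx - sA A (x (k+1)), ll⟫ := by
    have h1 : ∀ i : Fin p, ⟪xx i - x (k+1) i, -(mv (A i)ᵀ ll)⟫
        = -⟪mv (A i) (xx i) - mv (A i) (x (k+1) i), ll⟫ := by
      intro i
      rw [inner_neg_right, inner_mv_transpose, mv_sub]
    simp only [h1]
    rw [Finset.sum_neg_distrib, ← sum_inner, hcsx]
  have hJ2 : (∑ j, ⟪yy j - y (k+1) j, -(mv (B j)ᵀ ll)⟫)
      = -⟪sA B yy - sA B (y (k+1)), ll⟫ := by
    have h1 : ∀ j : Fin q, ⟪yy j - y (k+1) j, -(mv (B j)ᵀ ll)⟫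
        = -⟪mv (B j) (yy j) - mv (B j) (y (k+1) j), ll⟫ := by
      intro j
      rw [inner_neg_right, inner_mv_transpose, mv_sub]
    simp only [h1]
    rw [Finset.sum_neg_distrib, ← sum_inner, hcsy]
  -- reduce to algebra
  rw [ge_iff_le, ← sub_nonneg]
  refine le_trans (add_nonneg hX0 hY0) (le_of_eq ?_)
  simp only [Hform, Gform]
  rw [htl, hlam1, hJ1, hJ2]
  simp only [sA_sub, mv_sub]
  rw [hS2x, hS2y]
  simp only [← real_inner_self_eq_norm_sq]
  simp only [inner_add_left, inner_add_right, inner_sub_left, inner_sub_right,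
    real_inner_smul_left, real_inner_smul_right, inner_neg_left, inner_neg_right]
  simp only [real_inner_comm (sA A (x k)) (sA A xx),
    real_inner_comm (sA A (x (k+1))) (sA A xx),
    real_inner_comm (sA A (x (k+1))) (sA A (x k)),
    real_inner_comm (sA B yy) (sA A xx),
    real_inner_comm (sA B yy) (sA A (x k)),
    real_inner_comm (sA B yy) (sA A (x (k+1))),
    real_inner_comm (sA B (y k)) (sA A xx),
    real_inner_comm (sA B (y k)) (sA A (x k)),
    real_inner_comm (sA B (y k)) (sA A (x (k+1))),
    real_inner_comm (sA B (y k)) (sA B yy),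
    real_inner_comm (sA B (y (k+1))) (sA A xx),
    real_inner_comm (sA B (y (k+1))) (sA A (x k)),
    real_inner_comm (sA B (y (k+1))) (sA A (x (k+1))),
    real_inner_comm (sA B (y (k+1))) (sA B yy),
    real_inner_comm (sA B (y (k+1))) (sA B (y k)),
    real_inner_comm c (sA A xx),
    real_inner_comm c (sA A (x k)),
    real_inner_comm c (sA A (x (k+1))),
    real_inner_comm c (sA B yy),
    real_inner_comm c (sA B (y k)),
    real_inner_comm c (sA B (y (k+1))),
    real_inner_comm ll (sA A xx),
    real_inner_comm ll (sA A (x k)),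
    real_inner_comm ll (sA A (x (k+1))),
    real_inner_comm ll (sA B yy),
    real_inner_comm ll (sA B (y k)),
    real_inner_comm ll (sA B (y (k+1))),
    real_inner_comm ll c,
    real_inner_comm (lam k) (sA A xx),
    real_inner_comm (lam k) (sA A (x k)),
    real_inner_comm (lam k) (sA A (x (k+1))),
    real_inner_comm (lam k) (sA B yy),
    real_inner_comm (lam k) (sA B (y k)),
    real_inner_comm (lam k) (sA B (y (k+1))),
    real_inner_comm (lam k) c,
    real_inner_comm (lam k) ll]
  field_simp
  ring
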